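/- For a finite semigroup S, the following are equivalent: (i) ℕ × S has only countably many subsemigroups; (ii) ℕ × S has only countably many pairwise non-isomorphic subsemigroups (i.e. the subsemigroups of ℕ × S fall into only countably many isomorphism classes); (iii) S is a union of groups, i.e. every element of S lies in some subgroup of S. -/

import Mathlib

namespace CRTest

def uu (i : ℕ) : ℕ := 2 * 5 ^ i
def vv (i : ℕ) : ℕ := 6 * 5 ^ i
def ww (i : ℕ) : ℕ := 4 * 5 ^ i

def Xa (A : Set ℕ) : Set ℕ :=
  {n | (∃ i, n = uu i) ∨ (∃ i, n = vv i) ∨ (∃ i ∈ A, n = ww i)}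

lemma pow5_inj : ∀ (i j a b : ℕ), ¬ (5 ∣ a) → ¬ (5 ∣ b) → a * 5 ^ i = b * 5 ^ j →
    a = b ∧ i = j := by
  intro i
  induction i with
  | zero =>
    intro j a b ha hb h
    cases j with
    | zero => simpa using h
    | succ j =>
      exfalso; apply ha
      simp only [pow_zero, mul_one] at h
      exact ⟨b * 5 ^ j, by rw [h, pow_succ]; ring⟩
  | succ i ih =>
    intro j a b ha hb h
    cases j with
    | zero =>
      exfalso; apply hb
      simp only [pow_zero, mul_one] at h
      exact ⟨a * 5 ^ i, by rw [← h, pow_succ]; ring⟩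
    | succ j =>
      rw [pow_succ, pow_succ, ← mul_assoc, ← mul_assoc] at h
      have := ih j a b ha hb (Nat.eq_of_mul_eq_mul_right (by norm_num) h)
      exact ⟨this.1, by omega⟩

lemma uu_inj {i j : ℕ} (h : uu i = uu j) : i = j :=
  (pow5_inj i j 2 2 (by decide) (by decide) h).2
lemma vv_inj {i j : ℕ} (h : vv i = vv j) : i = j :=
  (pow5_inj i j 6 6 (by decide) (by decide) h).2
lemma ww_inj {i j : ℕ} (h : ww i = ww j) : i = j :=
  (pow5_inj i j 4 4 (by decide) (by decide) h).2
lemma uu_ne_vv {i j : ℕ} : uu i ≠ vv j := fun h =>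
  by have := (pow5_inj i j 2 6 (by decide) (by decide) h).1; omega
lemma uu_ne_ww {i j : ℕ} : uu i ≠ ww j := fun h =>
  by have := (pow5_inj i j 2 4 (by decide) (by decide) h).1; omega
lemma vv_ne_ww {i j : ℕ} : vv i ≠ ww j := fun h =>
  by have := (pow5_inj i j 6 4 (by decide) (by decide) h).1; omega

lemma key_dir (cy cz cx iy iz ix : ℕ)
    (hy : cy = 2 ∨ cy = 4 ∨ cy = 6) (hz : cz = 2 ∨ cz = 4 ∨ cz = 6)
    (hx : cx = 2 ∨ cx = 4 ∨ cx = 6)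
    (hle : iy ≤ iz)
    (h : cy * 5 ^ iy + cz * 5 ^ iz = 2 * (cx * 5 ^ ix)) :
    (cy = cz ∧ iy = iz ∧ cx = cy ∧ ix = iy) ∨
    (cy = 2 ∧ cz = 2 ∧ iz = iy + 1 ∧ cx = 6 ∧ ix = iy) ∨
    (cy = 2 ∧ cz = 6 ∧ iy = iz ∧ cx = 4 ∧ ix = iy) ∨
    (cy = 6 ∧ cz = 2 ∧ iy = iz ∧ cx = 4 ∧ ix = iy) := by
  obtain ⟨t, rfl⟩ : ∃ t, iz = iy + t := ⟨iz - iy, by omega⟩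
  rcases Nat.eq_zero_or_pos t with rfl | ht
  · -- same exponent
    simp only [Nat.add_zero] at h
    have h' : (cy + cz) * 5 ^ iy = (2 * cx) * 5 ^ ix := by
      have e0 : (cy + cz) * 5 ^ iy = cy * 5 ^ iy + cz * 5 ^ iy := by ring
      rw [e0, h]; ring
    by_cases h10 : cy + cz = 10
    · exfalso
      have hps : (5:ℕ) ^ (iy + 1) = 5 ^ iy * 5 := pow_succ 5 iy
      have h'' : 2 * 5 ^ (iy + 1) = (2 * cx) * 5 ^ ix := by
        rw [hps]; rw [h10] at h'; linarith [h']
      have := (pow5_inj (iy+1) ix 2 (2*cx) (by decide)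
        (by rcases hx with rfl|rfl|rfl <;> decide) h'').1
      rcases hx with rfl|rfl|rfl <;> omega
    · have h5 : ¬ (5 ∣ (cy + cz)) := by
        rcases hy with rfl|rfl|rfl <;> rcases hz with rfl|rfl|rfl <;> omega
      have hp := pow5_inj iy ix (cy + cz) (2 * cx) h5
        (by rcases hx with rfl|rfl|rfl <;> decide) h'
      rcases hy with rfl|rfl|rfl <;> rcases hz with rfl|rfl|rfl <;>
        rcases hx with rfl|rfl|rfl <;> omega
  · -- different exponents
    have e1 : cz * 5 ^ (iy + t) = (cz * 5 ^ t) * 5 ^ iy := by rw [pow_add]; ring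
    rw [e1] at h
    have h' : (cy + cz * 5 ^ t) * 5 ^ iy = (2 * cx) * 5 ^ ix := by
      have e0 : (cy + cz * 5 ^ t) * 5 ^ iy = cy * 5 ^ iy + cz * 5 ^ t * 5 ^ iy := by ring
      rw [e0, h]; ring
    have hd : (5:ℕ) ∣ cz * 5 ^ t := Dvd.dvd.mul_left (dvd_pow_self 5 ht.ne') cz
    have h5 : ¬ (5 ∣ (cy + cz * 5 ^ t)) := by
      rcases hy with rfl|rfl|rfl <;> omega
    have hp := pow5_inj iy ix (cy + cz * 5 ^ t) (2 * cx) h5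
      (by rcases hx with rfl|rfl|rfl <;> decide) h'
    have h5t : (5:ℕ) ≤ 5 ^ t := by
      calc (5:ℕ) = 5 ^ 1 := by norm_num
      _ ≤ 5 ^ t := Nat.pow_le_pow_right (by norm_num) ht
    have hbig : cz * 5 ^ t ≥ 10 := by rcases hz with rfl|rfl|rfl <;> omega
    have hcy2 : cy = 2 ∧ cz * 5 ^ t = 10 ∧ cx = 6 := by
      rcases hy with rfl|rfl|rfl <;> rcases hx with rfl|rfl|rfl <;> omega
    have ht1 : 5 ^ t = 5 ∧ cz = 2 := by
      rcases hz with rfl|rfl|rfl <;> omega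
    have htone : t = 1 := by
      rcases Nat.lt_or_ge t 2 with h2 | h2
      · omega
      · exfalso
        have : (5:ℕ) ^ 2 ≤ 5 ^ t := Nat.pow_le_pow_right (by norm_num) h2
        have := ht1.1; omega
    right; left
    exact ⟨hcy2.1, ht1.2, by omega, hcy2.2.2, hp.2.symm⟩

lemma key (cy cz cx iy iz ix : ℕ)
    (hy : cy = 2 ∨ cy = 4 ∨ cy = 6) (hz : cz = 2 ∨ cz = 4 ∨ cz = 6)
    (hx : cx = 2 ∨ cx = 4 ∨ cx = 6)
    (h : cy * 5 ^ iy + cz * 5 ^ iz = 2 * (cx * 5 ^ ix)) :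
    (cy = cz ∧ iy = iz ∧ cx = cy ∧ ix = iy) ∨
    (cy = 2 ∧ cz = 2 ∧ iz = iy + 1 ∧ cx = 6 ∧ ix = iy) ∨
    (cy = 2 ∧ cz = 2 ∧ iy = iz + 1 ∧ cx = 6 ∧ ix = iz) ∨
    (cy = 2 ∧ cz = 6 ∧ iy = iz ∧ cx = 4 ∧ ix = iy) ∨
    (cy = 6 ∧ cz = 2 ∧ iy = iz ∧ cx = 4 ∧ ix = iy) := by
  rcases le_total iy iz with hle | hle
  · rcases key_dir cy cz cx iy iz ix hy hz hx hle h with h'|h'|h'|h' <;>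
      (clear h hy hz hx; omega)
  · have h2 : cz * 5 ^ iz + cy * 5 ^ iy = 2 * (cx * 5 ^ ix) := by omega
    rcases key_dir cz cy cx iz iy ix hz hy hx hle h2 with h'|h'|h'|h' <;>
      (clear h h2 hy hz hx; omega)


-- membership helpers
lemma uu_mem {A : Set ℕ} (i : ℕ) : uu i ∈ Xa A := Or.inl ⟨i, rfl⟩
lemma vv_mem {A : Set ℕ} (i : ℕ) : vv i ∈ Xa A := Or.inr (Or.inl ⟨i, rfl⟩)
lemma ww_mem {A : Set ℕ} {i : ℕ} (h : i ∈ A) : ww i ∈ Xa A := Or.inr (Or.inr ⟨i, h, rfl⟩)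

lemma form {A : Set ℕ} {n : ℕ} (h : n ∈ Xa A) :
    ∃ c i, (c = 2 ∨ c = 4 ∨ c = 6) ∧ n = c * 5 ^ i ∧ (c = 4 → i ∈ A) := by
  rcases h with ⟨i, rfl⟩ | ⟨i, rfl⟩ | ⟨i, hi, rfl⟩
  · exact ⟨2, i, by omega, rfl, by omega⟩
  · exact ⟨6, i, by omega, rfl, by omega⟩
  · exact ⟨4, i, by omega, rfl, fun _ => hi⟩

/-- Complete classification of midpoint relations in `Xa A`. -/
lemma mid_classify {A : Set ℕ} {x y z : ℕ} (hx : x ∈ Xa A) (hy : y ∈ Xa A) (hz : z ∈ Xa A)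
    (hyz : y ≠ z) (h : y + z = x + x) :
    (∃ i, x = vv i ∧ ((y = uu i ∧ z = uu (i+1)) ∨ (y = uu (i+1) ∧ z = uu i))) ∨
    (∃ i, i ∈ A ∧ x = ww i ∧ ((y = uu i ∧ z = vv i) ∨ (y = vv i ∧ z = uu i))) := by
  obtain ⟨cx, ix, hcx, rfl, hwx⟩ := form hx
  obtain ⟨cy, iy, hcy, rfl, hwy⟩ := form hy
  obtain ⟨cz, iz, hcz, rfl, hwz⟩ := form hz
  rw [← two_mul] at h
  rcases key cy cz cx iy iz ix hcy hcz hcx h with k | k | k | k | k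
  · exact absurd (by rw [k.1, k.2.1]) hyz
  · obtain ⟨e1, e2, e3, e4, e5⟩ := k
    exact Or.inl ⟨iy, by rw [e4, e5]; rfl, Or.inl ⟨by rw [e1]; rfl, by rw [e2, e3]; rfl⟩⟩
  · obtain ⟨e1, e2, e3, e4, e5⟩ := k
    exact Or.inl ⟨iz, by rw [e4, e5]; rfl, Or.inr ⟨by rw [e1, e3]; rfl, by rw [e2]; rfl⟩⟩
  · obtain ⟨e1, e2, e3, e4, e5⟩ := k
    exact Or.inr ⟨iy, e5 ▸ hwx e4, by rw [e4, e5]; rfl,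
      Or.inl ⟨by rw [e1]; rfl, by rw [e2, e3]; rfl⟩⟩
  · obtain ⟨e1, e2, e3, e4, e5⟩ := k
    exact Or.inr ⟨iy, e5 ▸ hwx e4, by rw [e4, e5]; rfl,
      Or.inr ⟨by rw [e1]; rfl, by rw [e2, e3]; rfl⟩⟩

def Mid (X : Set ℕ) (x : ℕ) : Prop :=
  x ∈ X ∧ ∃ y z, y ∈ X ∧ z ∈ X ∧ y ≠ z ∧ y + z = x + x
def Endp (X : Set ℕ) (e x : ℕ) : Prop :=
  e ∈ X ∧ x ∈ X ∧ ∃ y, y ∈ X ∧ y ≠ e ∧ e + y = x + x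
def Vtx (X : Set ℕ) (x : ℕ) : Prop :=
  x ∈ X ∧ ∃ y z, y ∈ X ∧ z ∈ X ∧ y ≠ z ∧ y + z = x + x ∧ ¬ Mid X y ∧ ¬ Mid X z
def InitP (X : Set ℕ) (x : ℕ) : Prop :=
  Vtx X x ∧ ∃ e, Endp X e x ∧ ∀ x', Vtx X x' → Endp X e x' → x' = x
def NextP (X : Set ℕ) (x x' : ℕ) : Prop :=
  Vtx X x ∧ Vtx X x' ∧ x ≠ x' ∧ ∃ e, Endp X e x ∧ Endp X e x'

lemma uu_succ_ne {i : ℕ} : uu (i+1) ≠ uu i := fun h => by have := uu_inj h; omega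
lemma ray_eq (i : ℕ) : uu i + uu (i+1) = vv i + vv i := by
  simp only [uu, vv, pow_succ]; ring
lemma pend_eq (i : ℕ) : uu i + vv i = ww i + ww i := by
  simp only [uu, vv, ww]; ring

lemma mid_v {A : Set ℕ} (i : ℕ) : Mid (Xa A) (vv i) :=
  ⟨vv_mem i, uu i, uu (i+1), uu_mem i, uu_mem (i+1), fun h => uu_succ_ne h.symm, ray_eq i⟩

lemma mid_w {A : Set ℕ} {i : ℕ} (h : i ∈ A) : Mid (Xa A) (ww i) :=
  ⟨ww_mem h, uu i, vv i, uu_mem i, vv_mem i, uu_ne_vv, pend_eq i⟩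
lemma mid_u_false {A : Set ℕ} (i : ℕ) : ¬ Mid (Xa A) (uu i) := by
  rintro ⟨_, y, z, hy, hz, hne, heq⟩
  rcases mid_classify (uu_mem i) hy hz hne heq with ⟨j, hj, _⟩ | ⟨j, _, hj, _⟩
  · exact uu_ne_vv hj
  · exact uu_ne_ww hj

lemma mid_char {A : Set ℕ} {x : ℕ} (h : Mid (Xa A) x) :
    (∃ i, x = vv i) ∨ (∃ i ∈ A, x = ww i) := by
  obtain ⟨hx, y, z, hy, hz, hne, heq⟩ := h
  rcases mid_classify hx hy hz hne heq with ⟨j, hj, _⟩ | ⟨j, hjA, hj, _⟩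
  · exact Or.inl ⟨j, hj⟩
  · exact Or.inr ⟨j, hjA, hj⟩

lemma vtx_v {A : Set ℕ} (i : ℕ) : Vtx (Xa A) (vv i) :=
  ⟨vv_mem i, uu i, uu (i+1), uu_mem i, uu_mem (i+1), fun h => uu_succ_ne h.symm, ray_eq i,
    mid_u_false i, mid_u_false (i+1)⟩

lemma vtx_char {A : Set ℕ} {x : ℕ} (h : Vtx (Xa A) x) : ∃ i, x = vv i := by
  obtain ⟨hx, y, z, hy, hz, hne, heq, hmy, hmz⟩ := h
  rcases mid_classify hx hy hz hne heq with ⟨j, hj, _⟩ | ⟨j, hjA, hj, hc⟩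
  · exact ⟨j, hj⟩
  · exfalso
    rcases hc with ⟨_, h2⟩ | ⟨h1, _⟩
    · exact hmz (h2 ▸ mid_v j)
    · exact hmy (h1 ▸ mid_v j)

lemma endp_u_v {A : Set ℕ} (i : ℕ) : Endp (Xa A) (uu i) (vv i) :=
  ⟨uu_mem i, vv_mem i, uu (i+1), uu_mem (i+1), uu_succ_ne, ray_eq i⟩
lemma endp_u1_v {A : Set ℕ} (i : ℕ) : Endp (Xa A) (uu (i+1)) (vv i) :=
  ⟨uu_mem (i+1), vv_mem i, uu i, uu_mem i, fun h => uu_succ_ne h.symm,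
    by rw [Nat.add_comm]; exact ray_eq i⟩

lemma endp_v_char {A : Set ℕ} {e : ℕ} {i : ℕ} (h : Endp (Xa A) e (vv i)) :
    e = uu i ∨ e = uu (i+1) := by
  obtain ⟨he, hx, y, hy, hne, heq⟩ := h
  rcases mid_classify hx he hy (fun hh => hne hh.symm) heq with
    ⟨j, hj, hc⟩ | ⟨j, hjA, hj, hc⟩
  · have hij : i = j := vv_inj hj
    subst hij
    rcases hc with ⟨h1, _⟩ | ⟨h1, _⟩
    · exact Or.inl h1
    · exact Or.inr h1
  · exact absurd hj vv_ne_ww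

lemma endp_vi_w {A : Set ℕ} {i : ℕ} (h : i ∈ A) : Endp (Xa A) (vv i) (ww i) :=
  ⟨vv_mem i, ww_mem h, uu i, uu_mem i, fun hh => uu_ne_vv hh,
    by rw [Nat.add_comm]; exact pend_eq i⟩

lemma endp_vi_char {A : Set ℕ} {i : ℕ} {x : ℕ} (h : Endp (Xa A) (vv i) x) :
    i ∈ A ∧ x = ww i := by
  obtain ⟨he, hx, y, hy, hne, heq⟩ := h
  rcases mid_classify hx he hy (fun hh => hne hh.symm) heq with
    ⟨j, hj, hc⟩ | ⟨j, hjA, hj, hc⟩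
  · exfalso
    rcases hc with ⟨h1, _⟩ | ⟨h1, _⟩ <;> exact uu_ne_vv h1.symm
  · rcases hc with ⟨h1, _⟩ | ⟨h1, _⟩
    · exact absurd h1.symm uu_ne_vv
    · have hij : i = j := vv_inj h1
      subst hij
      exact ⟨hjA, hj⟩

lemma init_char {A : Set ℕ} {x : ℕ} : InitP (Xa A) x ↔ x = vv 0 := by
  constructor
  · rintro ⟨hv, e, he, hu⟩
    obtain ⟨i, rfl⟩ := vtx_char hv
    rcases endp_v_char he with rfl | rfl
    · cases i with
      | zero => rfl
      | succ j =>
        exfalso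
        have h1 := hu (vv j) (vtx_v j) (endp_u1_v j)
        have := vv_inj h1
        omega
    · exfalso
      have h1 := hu (vv (i+1)) (vtx_v (i+1)) (endp_u_v (i+1))
      have := vv_inj h1
      omega
  · rintro rfl
    refine ⟨vtx_v 0, uu 0, endp_u_v 0, ?_⟩
    intro x' hv' he'
    obtain ⟨j, rfl⟩ := vtx_char hv'
    rcases endp_v_char he' with h1 | h1
    · have := uu_inj h1
      rw [← this]
    · exfalso
      have := uu_inj h1; omega

lemma next_char {A : Set ℕ} {x x' : ℕ} (h : NextP (Xa A) x x') :
    ∃ i, (x = vv i ∧ x' = vv (i+1)) ∨ (x = vv (i+1) ∧ x' = vv i) := by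
  obtain ⟨hvx, hvx', hne, e, he, he'⟩ := h
  obtain ⟨i, rfl⟩ := vtx_char hvx
  obtain ⟨j, rfl⟩ := vtx_char hvx'
  have hij : i ≠ j := fun hh => hne (by rw [hh])
  rcases endp_v_char he with h1 | h1
  · rcases endp_v_char he' with h2 | h2
    · rw [h1] at h2
      exact absurd (uu_inj h2) hij
    · rw [h1] at h2
      have hh := uu_inj h2
      exact ⟨j, Or.inr ⟨by rw [hh], rfl⟩⟩
  · rcases endp_v_char he' with h2 | h2
    · rw [h1] at h2
      have hh := uu_inj h2
      exact ⟨i, Or.inl ⟨rfl, by rw [← hh]⟩⟩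
    · rw [h1] at h2
      have hh := uu_inj h2
      exact absurd (by omega : i = j) hij

lemma next_holds {A : Set ℕ} (i : ℕ) : NextP (Xa A) (vv i) (vv (i+1)) :=
  ⟨vtx_v i, vtx_v (i+1), fun h => by have := vv_inj h; omega,
    uu (i+1), endp_u1_v i, endp_u_v (i+1)⟩


section Transport

variable {A B : Set ℕ} {α : ℕ → ℕ}
variable (hmem : ∀ x ∈ Xa A, α x ∈ Xa B)
variable (hinj : ∀ x ∈ Xa A, ∀ y ∈ Xa A, α x = α y → x = y)
variable (hsurj : ∀ y ∈ Xa B, ∃ x ∈ Xa A, α x = y)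
variable (hrel : ∀ x ∈ Xa A, ∀ y ∈ Xa A, ∀ z ∈ Xa A,
  (y + z = x + x ↔ α y + α z = α x + α x))

include hmem hinj hsurj hrel

lemma tMid : ∀ x ∈ Xa A, (Mid (Xa A) x ↔ Mid (Xa B) (α x)) := by
  intro x hx
  constructor
  · rintro ⟨_, y, z, hy, hz, hne, heq⟩
    exact ⟨hmem x hx, α y, α z, hmem y hy, hmem z hz,
      fun h => hne (hinj y hy z hz h), (hrel x hx y hy z hz).1 heq⟩
  · rintro ⟨_, y', z', hy', hz', hne, heq⟩
    obtain ⟨y, hy, rfl⟩ := hsurj y' hy'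
    obtain ⟨z, hz, rfl⟩ := hsurj z' hz'
    exact ⟨hx, y, z, hy, hz, fun h => hne (by rw [h]),
      (hrel x hx y hy z hz).2 heq⟩

lemma tEndp : ∀ e ∈ Xa A, ∀ x ∈ Xa A,
    (Endp (Xa A) e x ↔ Endp (Xa B) (α e) (α x)) := by
  intro e he x hx
  constructor
  · rintro ⟨_, _, y, hy, hne, heq⟩
    exact ⟨hmem e he, hmem x hx, α y, hmem y hy,
      fun h => hne (hinj y hy e he h), (hrel x hx e he y hy).1 heq⟩
  · rintro ⟨_, _, y', hy', hne, heq⟩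
    obtain ⟨y, hy, rfl⟩ := hsurj y' hy'
    exact ⟨he, hx, y, hy, fun h => hne (by rw [h]),
      (hrel x hx e he y hy).2 heq⟩

lemma tVtx : ∀ x ∈ Xa A, (Vtx (Xa A) x ↔ Vtx (Xa B) (α x)) := by
  intro x hx
  constructor
  · rintro ⟨_, y, z, hy, hz, hne, heq, hmy, hmz⟩
    exact ⟨hmem x hx, α y, α z, hmem y hy, hmem z hz,
      fun h => hne (hinj y hy z hz h), (hrel x hx y hy z hz).1 heq,
      fun h => hmy ((tMid hmem hinj hsurj hrel y hy).2 h),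
      fun h => hmz ((tMid hmem hinj hsurj hrel z hz).2 h)⟩
  · rintro ⟨_, y', z', hy', hz', hne, heq, hmy, hmz⟩
    obtain ⟨y, hy, rfl⟩ := hsurj y' hy'
    obtain ⟨z, hz, rfl⟩ := hsurj z' hz'
    exact ⟨hx, y, z, hy, hz, fun h => hne (by rw [h]),
      (hrel x hx y hy z hz).2 heq,
      fun h => hmy ((tMid hmem hinj hsurj hrel y hy).1 h),
      fun h => hmz ((tMid hmem hinj hsurj hrel z hz).1 h)⟩

lemma tInit : ∀ x ∈ Xa A, InitP (Xa A) x → InitP (Xa B) (α x) := by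
  rintro x hx ⟨hv, e, he, hu⟩
  have hemem : e ∈ Xa A := he.1
  refine ⟨(tVtx hmem hinj hsurj hrel x hx).1 hv, α e,
    (tEndp hmem hinj hsurj hrel e hemem x hx).1 he, ?_⟩
  intro x' hv' he'
  have hx'B : x' ∈ Xa B := hv'.1
  obtain ⟨xt, hxt, rfl⟩ := hsurj x' hx'B
  have h1 : Vtx (Xa A) xt := (tVtx hmem hinj hsurj hrel xt hxt).2 hv'
  have h2 : Endp (Xa A) e xt := (tEndp hmem hinj hsurj hrel e hemem xt hxt).2 he'
  rw [hu xt h1 h2]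

lemma tNext : ∀ x ∈ Xa A, ∀ x' ∈ Xa A,
    NextP (Xa A) x x' → NextP (Xa B) (α x) (α x') := by
  rintro x hx x' hx' ⟨hv, hv', hne, e, he, he'⟩
  have hemem : e ∈ Xa A := he.1
  exact ⟨(tVtx hmem hinj hsurj hrel x hx).1 hv,
    (tVtx hmem hinj hsurj hrel x' hx').1 hv',
    fun h => hne (hinj x hx x' hx' h), α e,
    (tEndp hmem hinj hsurj hrel e hemem x hx).1 he,
    (tEndp hmem hinj hsurj hrel e hemem x' hx').1 he'⟩

lemma rayfix : ∀ i, α (vv i) = vv i := by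
  have base0 : α (vv 0) = vv 0 := by
    have h1 : InitP (Xa A) (vv 0) := init_char.2 rfl
    have h2 : InitP (Xa B) (α (vv 0)) := tInit hmem hinj hsurj hrel (vv 0) (vv_mem 0) h1
    exact init_char.1 h2
  have step01 : α (vv 1) = vv 1 := by
    have h2 := tNext hmem hinj hsurj hrel (vv 0) (vv_mem 0) (vv 1) (vv_mem 1) (next_holds 0)
    rw [base0] at h2
    obtain ⟨j, ⟨h3, h4⟩ | ⟨h3, h4⟩⟩ := next_char h2
    · have := vv_inj h3; subst this; exact h4
    · exfalso; have := vv_inj h3; omega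
  have step : ∀ i, α (vv i) = vv i → α (vv (i+1)) = vv (i+1) → α (vv (i+2)) = vv (i+2) := by
    intro i hi hi1
    have h2 := tNext hmem hinj hsurj hrel (vv (i+1)) (vv_mem (i+1)) (vv (i+2))
      (vv_mem (i+2)) (next_holds (i+1))
    rw [hi1] at h2
    obtain ⟨j, ⟨h3, h4⟩ | ⟨h3, h4⟩⟩ := next_char h2
    · have hj : i + 1 = j := vv_inj h3
      subst hj; exact h4
    · exfalso
      have hj : i + 1 = j + 1 := vv_inj h3
      have hj' : j = i := by omega
      rw [hj', ← hi] at h4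
      have := hinj (vv (i+2)) (vv_mem (i+2)) (vv i) (vv_mem i) h4
      have := vv_inj this
      omega
  have main : ∀ i, α (vv i) = vv i ∧ α (vv (i+1)) = vv (i+1) := by
    intro i
    induction i with
    | zero => exact ⟨base0, step01⟩
    | succ n ih => exact ⟨ih.2, step n ih.1 ih.2⟩
  exact fun i => (main i).1

theorem comb_main : A = B := by
  ext i
  constructor
  · intro hiA
    have h1 : Endp (Xa A) (vv i) (ww i) := endp_vi_w hiA
    have h2 := (tEndp hmem hinj hsurj hrel (vv i) (vv_mem i) (ww i) (ww_mem hiA)).1 h1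
    rw [rayfix hmem hinj hsurj hrel i] at h2
    exact (endp_vi_char h2).1
  · intro hiB
    have h1 : Endp (Xa B) (vv i) (ww i) := endp_vi_w hiB
    obtain ⟨x0, hx0, hx0e⟩ := hsurj (ww i) (ww_mem hiB)
    rw [← hx0e, ← rayfix hmem hinj hsurj hrel i] at h1
    have h2 := (tEndp hmem hinj hsurj hrel (vv i) (vv_mem i) x0 hx0).2 h1
    have := (endp_vi_char h2).1
    exact this

end Transport


section Semi

variable {S : Type*} [Semigroup S]

abbrev MM (S : Type*) [Semigroup S] := Multiplicative ℕ+ × S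

variable (a : S)

/-- the point `(x, a)` of `ℕ+ × S` (for `x ≥ 1`). -/
def pt (x : ℕ) : MM S := (Multiplicative.ofAdd (⟨max x 1, by omega⟩ : ℕ+), a)

lemma pt_inj {x y : ℕ} (hx : 1 ≤ x) (hy : 1 ≤ y) (h : pt a x = pt a y) : x = y := by
  have h1 := congrArg Prod.fst h
  simp only [pt] at h1
  have h2 : (⟨max x 1, by omega⟩ : ℕ+) = ⟨max y 1, by omega⟩ := h1
  have := congrArg (fun (n : ℕ+) => (n : ℕ)) h2
  simp at this
  omega

lemma pt_mul {x y : ℕ} (hx : 1 ≤ x) (hy : 1 ≤ y) :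
    pt a x * pt a y = (Multiplicative.ofAdd (⟨x + y, by omega⟩ : ℕ+), a * a) := by
  simp only [pt, Prod.mk_mul_mk]
  congr 1
  apply Multiplicative.toAdd.injective
  apply PNat.coe_injective
  show max x 1 + max y 1 = x + y
  omega

lemma ptrel {x y z : ℕ} (hx : 1 ≤ x) (hy : 1 ≤ y) (hz : 1 ≤ z) :
    (y + z = x + x ↔ pt a y * pt a z = pt a x * pt a x) := by
  rw [pt_mul a hy hz, pt_mul a hx hx]
  constructor
  · intro h
    congr 2
    exact Subtype.ext h
  · intro h
    have h1 := congrArg Prod.fst h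
    simp only at h1
    have h2 : (⟨y + z, by omega⟩ : ℕ+) = ⟨x + x, by omega⟩ := h1
    have := congrArg (fun (n : ℕ+) => (n : ℕ)) h2
    simpa using this

def Gset (A : Set ℕ) : Set (MM S) := {p | ∃ x ∈ Xa A, p = pt a x}

def TT (A : Set ℕ) : Subsemigroup (MM S) := Subsemigroup.closure (Gset a A)

lemma pt_mem_TT {A : Set ℕ} {x : ℕ} (hx : x ∈ Xa A) : pt a x ∈ TT a A :=
  Subsemigroup.subset_closure ⟨x, hx, rfl⟩

variable (hstar : ∀ s t : S, s ∈ Subsemigroup.closure {a} → t ∈ Subsemigroup.closure {a} →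
  s * t ≠ a)

include hstar

lemma row {A : Set ℕ} : ∀ p ∈ TT a A,
    p.2 ∈ Subsemigroup.closure ({a} : Set S) ∧ (p.2 = a → p ∈ Gset a A) := by
  intro p hp
  induction hp using Subsemigroup.closure_induction with
  | mem q hq =>
    obtain ⟨x, hx, rfl⟩ := hq
    exact ⟨Subsemigroup.subset_closure rfl, fun _ => ⟨x, hx, rfl⟩⟩
  | mul q r hq hr ihq ihr =>
    refine ⟨Subsemigroup.mul_mem _ ihq.1 ihr.1, fun h => absurd h ?_⟩
    exact hstar q.2 r.2 ihq.1 ihr.1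

omit hstar in
lemma decomp {A : Set ℕ} : ∀ p ∈ TT a A, p ∉ Gset a A →
    ∃ q ∈ TT a A, ∃ r ∈ TT a A, q * r = p := by
  intro p hp
  induction hp using Subsemigroup.closure_induction with
  | mem q hq => exact fun hn => absurd hq hn
  | mul q r hq hr ihq ihr => exact fun _ => ⟨q, hq, r, hr, rfl⟩

lemma indec {A : Set ℕ} {p : MM S} (hp : p ∈ Gset a A) :
    ¬ ∃ q ∈ TT a A, ∃ r ∈ TT a A, q * r = p := by
  rintro ⟨q, hq, r, hr, rfl⟩
  obtain ⟨x, hx, hpt⟩ := hp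
  have h2 := (row a hstar q hq).1
  have h3 := (row a hstar r hr).1
  have : (q * r).2 = a := by rw [hpt]; rfl
  exact hstar q.2 r.2 h2 h3 this

/-- indecomposability inside the subtype -/
def IndecS {T : Subsemigroup (MM S)} (t : ↥T) : Prop := ¬ ∃ q r : ↥T, q * r = t

lemma indecS_iff {A : Set ℕ} (t : ↥(TT a A)) : IndecS t ↔ (t : MM S) ∈ Gset a A := by
  constructor
  · intro h
    by_contra hn
    obtain ⟨q, hq, r, hr, hqr⟩ := decomp a (t : MM S) t.2 hn
    exact h ⟨⟨q, hq⟩, ⟨r, hr⟩, Subtype.ext hqr⟩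
  · rintro hg ⟨q, r, hqr⟩
    apply indec a hstar hg
    exact ⟨q, q.2, r, r.2, congrArg Subtype.val hqr⟩

omit hstar in
lemma xa_pos {A : Set ℕ} {x : ℕ} (hx : x ∈ Xa A) : 1 ≤ x := by
  obtain ⟨c, i, hc, rfl, _⟩ := form hx
  have : 1 ≤ 5 ^ i := Nat.one_le_pow _ _ (by norm_num)
  rcases hc with rfl | rfl | rfl <;> omega

theorem iso_gives {A B : Set ℕ} (e : ↥(TT a A) ≃* ↥(TT a B)) : A = B := by
  classical
  -- transported indecomposability
  have etrans : ∀ t : ↥(TT a A), IndecS t → IndecS (e t) := by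
    rintro t ht ⟨q, r, hqr⟩
    exact ht ⟨e.symm q, e.symm r, by
      have := congrArg e.symm hqr
      rwa [map_mul, MulEquiv.symm_apply_apply] at this⟩
  have etrans' : ∀ t : ↥(TT a B), IndecS t → IndecS (e.symm t) := by
    rintro t ht ⟨q, r, hqr⟩
    exact ht ⟨e q, e r, by
      have := congrArg e hqr
      rwa [map_mul, MulEquiv.apply_symm_apply] at this⟩
  -- the induced map on generators
  set F : ℕ → MM S := fun x =>
    if hx : x ∈ Xa A then ((e ⟨pt a x, pt_mem_TT a hx⟩ : ↥(TT a B)) : MM S) else pt a 1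
    with hF
  have hFval : ∀ x (hx : x ∈ Xa A), ∃ y ∈ Xa B,
      F x = pt a y ∧ (e ⟨pt a x, pt_mem_TT a hx⟩ : MM S) = pt a y := by
    intro x hx
    have h1 : IndecS (⟨pt a x, pt_mem_TT a hx⟩ : ↥(TT a A)) :=
      (indecS_iff a hstar _).2 ⟨x, hx, rfl⟩
    have h2 := etrans _ h1
    obtain ⟨y, hy, hpt⟩ := (indecS_iff a hstar _).1 h2
    exact ⟨y, hy, by rw [hF]; simp [hx]; exact hpt, hpt⟩
  set α : ℕ → ℕ := fun x => (((Multiplicative.toAdd (F x).1) : ℕ+) : ℕ) with hα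
  have hval : ∀ {y : ℕ}, 1 ≤ y → (((Multiplicative.toAdd (pt a y).1) : ℕ+) : ℕ) = y := by
    intro y hy
    simp only [pt]
    show max y 1 = y
    omega
  have hαval : ∀ x (hx : x ∈ Xa A), α x ∈ Xa B ∧
      (e ⟨pt a x, pt_mem_TT a hx⟩ : MM S) = pt a (α x) := by
    intro x hx
    obtain ⟨y, hy, hFx, hex⟩ := hFval x hx
    have : α x = y := by rw [hα]; simp only; rw [hFx, hval (xa_pos hy)]
    rw [this]
    exact ⟨hy, hex⟩
  -- hypotheses of comb_main
  have hmem : ∀ x ∈ Xa A, α x ∈ Xa B := fun x hx => (hαval x hx).1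
  have hinj : ∀ x ∈ Xa A, ∀ y ∈ Xa A, α x = α y → x = y := by
    intro x hx y hy hxy
    have h1 := (hαval x hx).2
    have h2 := (hαval y hy).2
    rw [hxy] at h1
    have h3 : e ⟨pt a x, pt_mem_TT a hx⟩ = e ⟨pt a y, pt_mem_TT a hy⟩ :=
      Subtype.ext (h1.trans h2.symm)
    have h4 := e.injective h3
    have h5 : pt a x = pt a y := congrArg Subtype.val h4
    exact pt_inj a (xa_pos hx) (xa_pos hy) h5
  have hsurj : ∀ y ∈ Xa B, ∃ x ∈ Xa A, α x = y := by
    intro y hy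
    have h1 : IndecS (⟨pt a y, pt_mem_TT a hy⟩ : ↥(TT a B)) :=
      (indecS_iff a hstar _).2 ⟨y, hy, rfl⟩
    have h2 := etrans' _ h1
    obtain ⟨x, hx, hpt⟩ := (indecS_iff a hstar _).1 h2
    refine ⟨x, hx, ?_⟩
    have h3 : (⟨pt a x, pt_mem_TT a hx⟩ : ↥(TT a A)) = e.symm ⟨pt a y, pt_mem_TT a hy⟩ :=
      Subtype.ext hpt.symm
    have h4 : e ⟨pt a x, pt_mem_TT a hx⟩ = ⟨pt a y, pt_mem_TT a hy⟩ := by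
      rw [h3, MulEquiv.apply_symm_apply]
    have h5 := (hαval x hx).2
    rw [h4] at h5
    have h6 : pt a (α x) = pt a y := h5.symm
    exact pt_inj a (xa_pos (hmem x hx)) (xa_pos hy) h6
  have hrel : ∀ x ∈ Xa A, ∀ y ∈ Xa A, ∀ z ∈ Xa A,
      (y + z = x + x ↔ α y + α z = α x + α x) := by
    intro x hx y hy z hz
    rw [ptrel a (xa_pos hx) (xa_pos hy) (xa_pos hz),
      ptrel a (xa_pos (hmem x hx)) (xa_pos (hmem y hy)) (xa_pos (hmem z hz))]
    rw [← (hαval x hx).2, ← (hαval y hy).2, ← (hαval z hz).2]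
    constructor
    · intro h
      have h1 : (⟨pt a y, pt_mem_TT a hy⟩ : ↥(TT a A)) * ⟨pt a z, pt_mem_TT a hz⟩ =
          ⟨pt a x, pt_mem_TT a hx⟩ * ⟨pt a x, pt_mem_TT a hx⟩ := Subtype.ext h
      have h2 := congrArg e h1
      rw [map_mul, map_mul] at h2
      exact congrArg Subtype.val h2
    · intro h
      have h1 : e (⟨pt a y, pt_mem_TT a hy⟩ * ⟨pt a z, pt_mem_TT a hz⟩) =
          e (⟨pt a x, pt_mem_TT a hx⟩ * ⟨pt a x, pt_mem_TT a hx⟩) := by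
        rw [map_mul, map_mul]
        exact Subtype.ext h
      have h2 := e.injective h1
      exact congrArg Subtype.val h2
  exact comb_main hmem hinj hsurj hrel

end Semi


section Count

variable {S : Type*} [Semigroup S]

/-- embedding of `ℕ+ × S` into the monoid `ℕ × S¹`. -/
def iota : MM S → Multiplicative ℕ × WithOne S := fun p =>
  (Multiplicative.ofAdd ((Multiplicative.toAdd p.1 : ℕ+) : ℕ), (p.2 : WithOne S))

lemma iota_mul (p q : MM S) : iota (p * q) = iota p * iota q := by
  obtain ⟨g, s⟩ := p
  obtain ⟨h, t⟩ := q
  simp only [iota, Prod.mk_mul_mk, WithOne.coe_mul]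
  congr 1

lemma iota_inj : Function.Injective (iota (S := S)) := by
  rintro ⟨g, s⟩ ⟨h, t⟩ hgh
  simp only [iota, Prod.mk.injEq] at hgh
  obtain ⟨h1, h2⟩ := hgh
  have h1' : ((Multiplicative.toAdd g : ℕ+) : ℕ) = ((Multiplicative.toAdd h : ℕ+) : ℕ) := by
    simpa using h1
  have hgg : Multiplicative.toAdd g = Multiplicative.toAdd h := PNat.coe_injective h1'
  have hg : g = h := by
    have := congrArg Multiplicative.ofAdd hgg
    simpa using this
  have ht : s = t := WithOne.coe_inj.1 h2
  rw [hg, ht]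

/-- `cpow p k = p^(k+1)` in a bare semigroup. -/
def cpow (p : MM S) : ℕ → MM S
  | 0 => p
  | k+1 => cpow p k * p

lemma cpow_mem {T : Subsemigroup (MM S)} {p : MM S} (hp : p ∈ T) (k : ℕ) : cpow p k ∈ T := by
  induction k with
  | zero => exact hp
  | succ n ih => exact Subsemigroup.mul_mem _ ih hp

lemma iota_cpow (p : MM S) (k : ℕ) : iota (cpow p k) = (iota p) ^ (k + 1) := by
  induction k with
  | zero => simp [cpow]
  | succ n ih => rw [cpow, iota_mul, ih, ← pow_succ]

/-- every completely regular element of a finite semigroup satisfies `s^(d+1) = s`. -/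
lemma period [Finite S] (h3 : ∀ a : S, ∃ b : S, a * b * a = a ∧ a * b = b * a) (s : S) :
    ∃ d : ℕ, 0 < d ∧ (↑s : WithOne S) ^ (d + 1) = ↑s := by
  haveI := Fintype.ofFinite S
  haveI : Fintype (WithOne S) := inferInstanceAs (Fintype (Option S))
  obtain ⟨b, hb1, hb2⟩ := h3 s
  set x : WithOne S := (s : WithOne S) with hx
  set y : WithOne S := (b : WithOne S) with hy
  have hxyx : x * y * x = x := by
    rw [hx, hy, ← WithOne.coe_mul, ← WithOne.coe_mul, hb1]
  have hxy : x * y = y * x := by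
    rw [hx, hy, ← WithOne.coe_mul, ← WithOne.coe_mul, hb2]
  have hx2 : x = x * x * y := by
    conv_lhs => rw [← hxyx]
    rw [mul_assoc, mul_assoc, ← hxy]
  have claim : ∀ m, x = x ^ (m + 1) * y ^ m := by
    intro m
    induction m with
    | zero => simp
    | succ n ih =>
      have h1 : x ^ (n + 2) * y = x ^ (n + 1) := by
        calc x ^ (n + 2) * y = x ^ n * (x * x * y) := by
              rw [pow_succ, pow_succ, mul_assoc, mul_assoc, mul_assoc]
        _ = x ^ n * x := by rw [← hx2]
        _ = x ^ (n + 1) := by rw [pow_succ]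
      calc x = x ^ (n + 1) * y ^ n := ih
      _ = (x ^ (n + 2) * y) * y ^ n := by rw [h1]
      _ = x ^ (n + 2) * y ^ (n + 1) := by rw [mul_assoc, ← pow_succ']
  obtain ⟨i, j, hij, hfij⟩ :=
    Finite.exists_ne_map_eq_of_infinite (fun n : ℕ => x ^ (n + 1))
  wlog hlt : i < j generalizing i j
  · exact this j i hij.symm hfij.symm (by omega)
  replace hfij : x ^ (i + 1) = x ^ (j + 1) := hfij
  set d := j - i with hd
  refine ⟨d, by omega, ?_⟩
  have hstep : x ^ (i + 2) = x ^ d * x ^ (i + 2) := by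
    calc x ^ (i + 2) = x * x ^ (i + 1) := pow_succ' x (i + 1)
    _ = x * x ^ (j + 1) := by rw [hfij]
    _ = x ^ (j + 2) := (pow_succ' x (j + 1)).symm
    _ = x ^ (d + (i + 2)) := by congr 1; omega
    _ = x ^ d * x ^ (i + 2) := pow_add x d (i + 2)
  calc x ^ (d + 1) = x ^ d * x := by rw [pow_succ]
  _ = x ^ d * (x ^ (i + 2) * y ^ (i + 1)) := by rw [← claim (i + 1)]
  _ = (x ^ d * x ^ (i + 2)) * y ^ (i + 1) := by rw [mul_assoc]
  _ = x ^ (i + 2) * y ^ (i + 1) := by rw [← hstep]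
  _ = x := (claim (i + 1)).symm

/-- fibers of a subsemigroup of `ℕ+ × S`. -/
def fib (T : Subsemigroup (MM S)) (s : S) : Set ℕ :=
  {n | ∃ h : 0 < n, ((Multiplicative.ofAdd (⟨n, h⟩ : ℕ+), s) : MM S) ∈ T}

lemma iota_pt (n : ℕ) (h : 0 < n) (s : S) :
    iota ((Multiplicative.ofAdd (⟨n, h⟩ : ℕ+), s) : MM S) =
      (Multiplicative.ofAdd n, (s : WithOne S)) := by
  simp [iota]
  rfl

lemma fib_closed {T : Subsemigroup (MM S)} {s : S} {d : ℕ} (hd : 0 < d)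
    (hper : (↑s : WithOne S) ^ (d + 1) = ↑s) :
    ∀ m ∈ fib T s, ∀ n ∈ fib T s, m + d * n ∈ fib T s := by
  rintro m ⟨hm, hmem⟩ n ⟨hn, hnmem⟩
  set P : MM S := (Multiplicative.ofAdd (⟨m, hm⟩ : ℕ+), s) with hP
  set Q : MM S := (Multiplicative.ofAdd (⟨n, hn⟩ : ℕ+), s) with hQ
  have hR : P * cpow Q (d - 1) ∈ T := Subsemigroup.mul_mem _ hmem (cpow_mem hnmem _)
  have hiota : iota (P * cpow Q (d - 1)) =
      (Multiplicative.ofAdd (m + d * n), (s : WithOne S)) := by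
    rw [iota_mul, iota_cpow]
    have hd1 : d - 1 + 1 = d := by omega
    rw [hd1, hP, hQ, iota_pt, iota_pt]
    rw [Prod.pow_mk, Prod.mk_mul_mk, Prod.mk.injEq]
    refine ⟨?_, ?_⟩
    · rw [← ofAdd_nsmul, ← ofAdd_add]
      congr 1
    · exact (pow_succ' _ _).symm.trans hper
  have heq : P * cpow Q (d - 1) =
      ((Multiplicative.ofAdd (⟨m + d * n, by positivity⟩ : ℕ+), s) : MM S) := by
    apply iota_inj
    rw [hiota, iota_pt]
  exact ⟨by positivity, heq ▸ hR⟩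

/-- countable codes for the possible fibers -/
def DD : Type := Σ p : ℕ+, (Fin p → Option ℕ)

instance : Countable DD := by
  unfold DD; infer_instance

def decode : DD → Set ℕ := fun dd =>
  {n | ∃ m j, dd.2 ⟨n % dd.1, Nat.mod_lt _ dd.1.pos⟩ = some m ∧ n = m + j * (dd.1 : ℕ)}

lemma encode_spec (A : Set ℕ) (p : ℕ+) (hcl : ∀ m ∈ A, m + (p : ℕ) ∈ A) :
    ∃ dd : DD, decode dd = A := by
  classical
  refine ⟨⟨p, fun r => if h : ∃ n, n ∈ A ∧ n % (p : ℕ) = (r : ℕ) then some (Nat.find h)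
    else none⟩, ?_⟩
  have haux : ∀ (j m : ℕ), m ∈ A → m + j * (p : ℕ) ∈ A := by
    intro j
    induction j with
    | zero => intro m hm; simpa using hm
    | succ k ih =>
      intro m hm
      have h1 := hcl _ (ih m hm)
      have h2 : m + k * (p:ℕ) + (p:ℕ) = m + (k+1) * (p:ℕ) := by ring
      rwa [h2] at h1
  ext n
  simp only [decode, Set.mem_setOf_eq]
  constructor
  · rintro ⟨m, j, hsome, hnm⟩
    by_cases h : ∃ k, k ∈ A ∧ k % (p:ℕ) = ((⟨n % (p:ℕ), Nat.mod_lt _ p.pos⟩ : Fin p) : ℕ)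
    · rw [dif_pos h] at hsome
      have hm := Option.some_injective _ hsome
      have hspec := Nat.find_spec h
      rw [hm] at hspec
      exact hnm ▸ haux j m hspec.1
    · rw [dif_neg h] at hsome
      exact absurd hsome (by simp)
  · intro hn
    have h : ∃ k, k ∈ A ∧ k % (p:ℕ) = ((⟨n % (p:ℕ), Nat.mod_lt _ p.pos⟩ : Fin p) : ℕ) :=
      ⟨n, hn, rfl⟩
    set m := Nat.find h with hmdef
    have hspec := Nat.find_spec h
    have hle : m ≤ n := Nat.find_min' h ⟨hn, rfl⟩
    have hmod : m % (p:ℕ) = n % (p:ℕ) := by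
      have := hspec.2
      simpa using this
    have hdvd : (p:ℕ) ∣ n - m := (Nat.modEq_iff_dvd' hle).1 hmod
    obtain ⟨j, hj⟩ := hdvd
    have hj' : n - m = j * (p:ℕ) := by rw [hj]; ring
    refine ⟨m, j, ?_, by omega⟩
    rw [dif_pos h]

lemma fib_decode [Finite S] (h3 : ∀ a : S, ∃ b : S, a * b * a = a ∧ a * b = b * a)
    (T : Subsemigroup (MM S)) (s : S) : ∃ dd : DD, decode dd = fib T s := by
  classical
  by_cases hne : ∃ n, n ∈ fib T s
  · obtain ⟨n₀, hn₀⟩ := hne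
    obtain ⟨d, hd, hper⟩ := period h3 s
    have hpos : 0 < n₀ := hn₀.1
    refine encode_spec (fib T s) ⟨d * n₀, by positivity⟩ ?_
    intro m hm
    exact fib_closed hd hper m hm n₀ hn₀
  · refine ⟨⟨1, fun _ => none⟩, ?_⟩
    ext n
    simp only [decode, Set.mem_setOf_eq]
    constructor
    · rintro ⟨m, j, hsome, _⟩
      exact absurd hsome (by simp)
    · intro hn
      exact absurd ⟨n, hn⟩ hne

lemma fib_determines {T T' : Subsemigroup (MM S)} (h : ∀ s, fib T s = fib T' s) : T = T' := by
  ext p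
  obtain ⟨g, s⟩ := p
  have hpos : 0 < ((Multiplicative.toAdd g : ℕ+) : ℕ) := (Multiplicative.toAdd g).pos
  have hecmp : ((Multiplicative.ofAdd (⟨((Multiplicative.toAdd g : ℕ+) : ℕ), hpos⟩ : ℕ+), s) : MM S)
      = (g, s) := by
    have h0 : (⟨((Multiplicative.toAdd g : ℕ+) : ℕ), hpos⟩ : ℕ+) = Multiplicative.toAdd g :=
      Subtype.ext rfl
    rw [h0, ofAdd_toAdd]
  constructor
  · intro hp
    have h1 : ((Multiplicative.toAdd g : ℕ+) : ℕ) ∈ fib T s := ⟨hpos, hecmp ▸ hp⟩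
    have h2 := (h s) ▸ h1
    obtain ⟨h3, h4⟩ := h2
    exact hecmp ▸ h4
  · intro hp
    have h1 : ((Multiplicative.toAdd g : ℕ+) : ℕ) ∈ fib T' s := ⟨hpos, hecmp ▸ hp⟩
    have h2 := (h s).symm ▸ h1
    obtain ⟨h3, h4⟩ := h2
    exact hecmp ▸ h4

theorem count_of_cr [Finite S] (h3 : ∀ a : S, ∃ b : S, a * b * a = a ∧ a * b = b * a) :
    Countable (Subsemigroup (MM S)) := by
  classical
  have hchoice : ∀ T : Subsemigroup (MM S), ∀ s : S, ∃ dd : DD, decode dd = fib T s :=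
    fun T s => fib_decode h3 T s
  choose enc henc using hchoice
  have hinj : Function.Injective enc := by
    intro T T' hTT
    apply fib_determines
    intro s
    rw [← henc T s, ← henc T' s, hTT]
  exact hinj.countable

end Count


section Star

variable {S : Type*} [Semigroup S] {a : S}

lemma comm_cl : ∀ x ∈ Subsemigroup.closure ({a} : Set S), a * x = x * a := by
  intro x hx
  induction hx using Subsemigroup.closure_induction with
  | mem y hy => rw [Set.mem_singleton_iff.1 hy]
  | mul y z hy hz ihy ihz =>
    rw [← mul_assoc, ihy, mul_assoc, ihz, ← mul_assoc]

lemma decomp_cl : ∀ x ∈ Subsemigroup.closure ({a} : Set S),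
    x = a ∨ ∃ y ∈ Subsemigroup.closure ({a} : Set S), x = a * y := by
  intro x hx
  induction hx using Subsemigroup.closure_induction with
  | mem y hy => exact Or.inl (Set.mem_singleton_iff.1 hy)
  | mul y z hy hz ihy ihz =>
    right
    rcases ihy with rfl | ⟨y', hy', rfl⟩
    · exact ⟨z, hz, rfl⟩
    · exact ⟨y' * z, Subsemigroup.mul_mem _ hy' hz, by rw [mul_assoc]⟩

lemma hstar_of_not_cr (ha : ∀ b : S, ¬(a * b * a = a ∧ a * b = b * a)) :
    ∀ s t : S, s ∈ Subsemigroup.closure {a} → t ∈ Subsemigroup.closure {a} → s * t ≠ a := by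
  intro s t hs ht hst
  -- reduce to: a = a*a or a = (a*a)*r with r in the closure
  have key : a * a = a ∨ ∃ r ∈ Subsemigroup.closure ({a} : Set S), a * a * r = a := by
    rcases decomp_cl s hs with h | ⟨s', hs', h⟩ <;>
      rcases decomp_cl t ht with h' | ⟨t', ht', h'⟩ <;> rw [h, h'] at hst
    · exact Or.inl hst
    · refine Or.inr ⟨t', ht', ?_⟩
      rw [← mul_assoc] at hst
      exact hst
    · refine Or.inr ⟨s', hs', ?_⟩
      calc a * a * s' = a * (a * s') := mul_assoc a a s'
      _ = a * (s' * a) := by rw [comm_cl s' hs']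
      _ = a * s' * a := (mul_assoc a s' a).symm
      _ = a := hst
    · refine Or.inr ⟨s' * t', Subsemigroup.mul_mem _ hs' ht', ?_⟩
      calc a * a * (s' * t') = a * (a * (s' * t')) := mul_assoc a a (s' * t')
      _ = a * ((a * s') * t') := by rw [mul_assoc a s' t']
      _ = a * ((s' * a) * t') := by rw [comm_cl s' hs']
      _ = a * (s' * (a * t')) := by rw [mul_assoc s' a t']
      _ = a * s' * (a * t') := (mul_assoc a s' (a * t')).symm
      _ = a := hst
  rcases key with haa | ⟨r, hr, har⟩
  · exact ha a ⟨by rw [haa, haa], rfl⟩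
  · refine ha r ⟨?_, (comm_cl r hr).symm ▸ rfl⟩
    · have : a * r * a = a * a * r := by
        rw [mul_assoc, ← comm_cl r hr, ← mul_assoc]
      rw [this, har]

end Star

section Final

variable {S : Type*} [Semigroup S]

lemma not_two (a : S)
    (hstar : ∀ s t : S, s ∈ Subsemigroup.closure {a} → t ∈ Subsemigroup.closure {a} →
      s * t ≠ a) :
    ¬ ∃ F : Set (Subsemigroup (MM S)), F.Countable ∧
      ∀ A : Subsemigroup (MM S), ∃ B ∈ F, Nonempty (A ≃* B) := by
  rintro ⟨F, hFc, hFall⟩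
  choose g hgF hgiso using fun A : Set ℕ => hFall (TT a A)
  have hginj : Function.Injective g := by
    intro A A' hAA
    obtain ⟨e1⟩ := hgiso A
    obtain ⟨e2⟩ := hgiso A'
    exact iso_gives a hstar
      (e1.trans ((MulEquiv.subsemigroupCongr hAA).trans e2.symm))
  haveI := hFc.to_subtype
  obtain ⟨f, hf⟩ := (exists_injective_nat (↥F))
  have : Function.Injective (fun A : Set ℕ => f ⟨g A, hgF A⟩) := by
    intro A A' h
    exact hginj (congrArg Subtype.val (hf h))
  exact Function.cantor_injective _ this

end Final

end CRTest

/-- For a finite semigroup `S`, the following are equivalent: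
(i) `ℕ × S` has only countably many subsemigroups;
(ii) `ℕ × S` has only countably many subsemigroups up to isomorphism;
(iii) `S` is a union of groups (completely regular). -/
theorem countably_many_subsemigroups_iff_union_of_groups
    (S : Type*) [Semigroup S] [Finite S] :
    List.TFAE
      [ Countable (Subsemigroup (Multiplicative ℕ+ × S)),
        ∃ F : Set (Subsemigroup (Multiplicative ℕ+ × S)), F.Countable ∧
          ∀ A : Subsemigroup (Multiplicative ℕ+ × S), ∃ B ∈ F, Nonempty (A ≃* B),
        ∀ a : S, ∃ b : S, a * b * a = a ∧ a * b = b * a ] := by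
  tfae_have 1 → 2 := by
    intro h
    exact ⟨Set.univ, Set.countable_univ, fun A => ⟨A, trivial, ⟨MulEquiv.refl _⟩⟩⟩
  tfae_have 2 → 3 := by
    intro h2
    by_contra h3
    push_neg at h3
    obtain ⟨a, ha⟩ := h3
    have ha' : ∀ b : S, ¬(a * b * a = a ∧ a * b = b * a) := by
      intro b hb
      exact (ha b hb.1) hb.2
    exact CRTest.not_two a (CRTest.hstar_of_not_cr ha') h2
  tfae_have 3 → 1 := fun h3 => CRTest.count_of_cr h3
  tfae_finish
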